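/- Let V : ℝ³ → ℝ be differentiable, with V and x·∇V bounded on ℝ³ and both continuous at the origin. Let Q : ℝ³ → ℝ be differentiable with Q, ∇Q ∈ L²(ℝ³), Q ∈ L⁴(ℝ³), M(Q) > 0, G(Q) > 0 and 2H₀(Q) = 3G(Q) (so that K₀,₂(Q) = 0 and E₀(Q) = G(Q)/2 > 0). Then for every ε > 0 there exists μ' > 0 such that for every μ ∈ (0, μ'] there exists a function φ : ℝ³ → ℂ, differentiable with φ, ∇φ ∈ L²(ℝ³) and φ ∈ L⁴(ℝ³), satisfying M(φ) ≤ μ, K_{V,2}(φ) ≤ 0, G(φ) ≥ 1 and I_V(φ) ≤ μ^{−1}·E₀(Q)·M(Q) + (V(0) + ε)·μ. -/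

import Mathlib

open MeasureTheory Filter

noncomputable section

abbrev R3 := EuclideanSpace ℝ (Fin 3)

/-- Mass: `M(φ) = (1/2) ∫ |φ|²`. -/
def Mfun {E : Type*} [NormedAddCommGroup E] (φ : R3 → E) : ℝ :=
  (1 / 2) * ∫ x, ‖φ x‖ ^ 2

/-- Kinetic energy: `H₀(φ) = (1/2) ∫ |∇φ|²`. -/
def H0 {E : Type*} [NormedAddCommGroup E] [NormedSpace ℝ E] (φ : R3 → E) : ℝ :=
  (1 / 2) * ∫ x, ‖fderiv ℝ φ x‖ ^ 2

/-- Quartic functional: `G(φ) = (1/4) ∫ |φ|⁴`. -/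
def Gfun {E : Type*} [NormedAddCommGroup E] (φ : R3 → E) : ℝ :=
  (1 / 4) * ∫ x, ‖φ x‖ ^ 4

/-- Free energy: `E₀(φ) = H₀(φ) - G(φ)`. -/
def E0 {E : Type*} [NormedAddCommGroup E] [NormedSpace ℝ E] (φ : R3 → E) : ℝ :=
  H0 φ - Gfun φ

/-- The radial derivative of the potential: `(x·∇V)(x) = ⟨x, ∇V(x)⟩ = (DV(x))(x)`. -/
def xdV (V : R3 → ℝ) (x : R3) : ℝ := fderiv ℝ V x x

/-- Free virial functional: `K₀,₂(φ) = 2H₀(φ) - 3G(φ)`. -/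
def K02 {E : Type*} [NormedAddCommGroup E] [NormedSpace ℝ E] (φ : R3 → E) : ℝ :=
  2 * H0 φ - 3 * Gfun φ

/-- Virial functional with potential:
`K_{V,2}(φ) = 2H₀(φ) - 3G(φ) - (1/2) ∫ (x·∇V) |φ|²`. -/
def K2 {E : Type*} [NormedAddCommGroup E] [NormedSpace ℝ E]
    (V : R3 → ℝ) (φ : R3 → E) : ℝ :=
  2 * H0 φ - 3 * Gfun φ - (1 / 2) * ∫ x, xdV V x * ‖φ x‖ ^ 2

/-- `I_V(φ) = (1/2)G(φ) + (1/4) ∫ ((x·∇V) + 2V) |φ|²`. -/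
def IV {E : Type*} [NormedAddCommGroup E] (V : R3 → ℝ) (φ : R3 → E) : ℝ :=
  (1 / 2) * Gfun φ + (1 / 4) * ∫ x, (xdV V x + 2 * V x) * ‖φ x‖ ^ 2

/-- Energy with potential: `E_V(φ) = H₀(φ) + (1/2)∫ V|φ|² - G(φ)`. -/
def EV {E : Type*} [NormedAddCommGroup E] [NormedSpace ℝ E]
    (V : R3 → ℝ) (φ : R3 → E) : ℝ :=
  H0 φ + (1 / 2) * ∫ x, V x * ‖φ x‖ ^ 2 - Gfun φ

/- ===================  Auxiliary lemmas  =================== -/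

lemma aux_xdV_meas (V : R3 → ℝ) : Measurable (xdV V) := by
  have h1 : Measurable fun x : R3 => (fderiv ℝ V x, x) :=
    (measurable_fderiv ℝ V).prodMk measurable_id
  exact (isBoundedBilinearMap_apply.continuous.measurable).comp h1

lemma aux_xdV_zero (V : R3 → ℝ) : xdV V 0 = 0 := (fderiv ℝ V 0).map_zero

lemma aux_cov (F : R3 → ℝ) {c : ℝ} (hc : 0 < c) :
    ∫ x : R3, F (c • x) = (c ^ 3)⁻¹ * ∫ y, F y := by
  rw [MeasureTheory.Measure.integral_comp_smul_of_nonneg volume F c (hR := hc.le)]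
  simp [finrank_euclideanSpace_fin, smul_eq_mul]

lemma aux_norm (Q : R3 → ℝ) (A c : ℝ) (hA : 0 ≤ A) (x : R3) :
    ‖((A * Q (c • x) : ℝ) : ℂ)‖ = A * ‖Q (c • x)‖ := by
  rw [Complex.norm_real, Real.norm_eq_abs, abs_mul, abs_of_nonneg hA, Real.norm_eq_abs]

lemma aux_diff {Q : R3 → ℝ} (hQ : Differentiable ℝ Q) (A c : ℝ) :
    Differentiable ℝ (fun x : R3 => ((A * Q (c • x) : ℝ) : ℂ)) :=
  Complex.ofRealCLM.differentiable.comp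
    ((hQ.comp ((differentiable_id (𝕜 := ℝ)).const_smul c)).const_mul A)

lemma aux_fderiv {Q : R3 → ℝ} (hQ : Differentiable ℝ Q) {A c : ℝ} (hA : 0 ≤ A) (hc : 0 ≤ c)
    (x : R3) :
    ‖fderiv ℝ (fun y : R3 => ((A * Q (c • y) : ℝ) : ℂ)) x‖ = A * c * ‖fderiv ℝ Q (c • x)‖ := by
  have hsm : HasFDerivAt (fun y : R3 => c • y) (c • ContinuousLinearMap.id ℝ R3) x := by
    exact (hasFDerivAt_id x).const_smul c
  have h1 : HasFDerivAt (fun y : R3 => Q (c • y))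
      ((fderiv ℝ Q (c • x)).comp (c • ContinuousLinearMap.id ℝ R3)) x :=
    (hQ (c • x)).hasFDerivAt.comp x hsm
  have h2 := h1.const_mul A
  have h3 : HasFDerivAt (fun y : R3 => ((A * Q (c • y) : ℝ) : ℂ))
      (Complex.ofRealCLM.comp
        (A • ((fderiv ℝ Q (c • x)).comp (c • ContinuousLinearMap.id ℝ R3)))) x :=
    Complex.ofRealCLM.hasFDerivAt.comp x h2
  rw [h3.fderiv]
  rw [show Complex.ofRealCLM = Complex.ofRealLI.toContinuousLinearMap from rfl,
    LinearIsometry.norm_toContinuousLinearMap_comp, norm_smul]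
  have hcomp : (fderiv ℝ Q (c • x)).comp (c • ContinuousLinearMap.id ℝ R3)
      = c • (fderiv ℝ Q (c • x)) := by
    ext v; simp [ContinuousLinearMap.smul_apply, _root_.map_smul]
  rw [hcomp, norm_smul, Real.norm_eq_abs, Real.norm_eq_abs, abs_of_nonneg hA, abs_of_nonneg hc]
  ring

lemma aux_int_pow (Q : R3 → ℝ) {A c : ℝ} (hA : 0 ≤ A) (hc : 0 < c) (n : ℕ) :
    ∫ x : R3, ‖((A * Q (c • x) : ℝ) : ℂ)‖ ^ n = A ^ n * ((c ^ 3)⁻¹ * ∫ y, ‖Q y‖ ^ n) := by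
  have h : (fun x : R3 => ‖((A * Q (c • x) : ℝ) : ℂ)‖ ^ n)
      = fun x => A ^ n * ((fun y => ‖Q y‖ ^ n) (c • x)) := by
    funext x; rw [aux_norm Q A c hA, mul_pow]
  rw [h, integral_const_mul]
  congr 1
  exact aux_cov (fun y => ‖Q y‖ ^ n) hc

lemma aux_int_fderiv {Q : R3 → ℝ} (hQ : Differentiable ℝ Q) {A c : ℝ} (hA : 0 ≤ A) (hc : 0 < c) :
    ∫ x : R3, ‖fderiv ℝ (fun y : R3 => ((A * Q (c • y) : ℝ) : ℂ)) x‖ ^ 2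
      = (A * c) ^ 2 * ((c ^ 3)⁻¹ * ∫ y, ‖fderiv ℝ Q y‖ ^ 2) := by
  have h : (fun x : R3 => ‖fderiv ℝ (fun y : R3 => ((A * Q (c • y) : ℝ) : ℂ)) x‖ ^ 2)
      = fun x => (A * c) ^ 2 * ((fun y => ‖fderiv ℝ Q y‖ ^ 2) (c • x)) := by
    funext x; rw [aux_fderiv hQ hA hc.le x, mul_pow]
  rw [h, integral_const_mul]
  congr 1
  exact aux_cov (fun y => ‖fderiv ℝ Q y‖ ^ 2) hc

lemma aux_int_weight (W Q : R3 → ℝ) {A c : ℝ} (hA : 0 ≤ A) (hc : 0 < c) :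
    ∫ x : R3, W x * ‖((A * Q (c • x) : ℝ) : ℂ)‖ ^ 2
      = A ^ 2 * ((c ^ 3)⁻¹ * ∫ y, W (c⁻¹ • y) * ‖Q y‖ ^ 2) := by
  have h : (fun x : R3 => W x * ‖((A * Q (c • x) : ℝ) : ℂ)‖ ^ 2)
      = fun x => A ^ 2 * ((fun y => W (c⁻¹ • y) * ‖Q y‖ ^ 2) (c • x)) := by
    funext x
    show W x * ‖((A * Q (c • x) : ℝ) : ℂ)‖ ^ 2 = A ^ 2 * (W (c⁻¹ • c • x) * ‖Q (c • x)‖ ^ 2)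
    rw [aux_norm Q A c hA, smul_smul, inv_mul_cancel₀ hc.ne', one_smul, mul_pow]
    ring
  rw [h, integral_const_mul]
  congr 1
  exact aux_cov (fun y => W (c⁻¹ • y) * ‖Q y‖ ^ 2) hc

lemma aux_tendsto {Q : R3 → ℝ} (hQc : Continuous Q)
    (hQ2 : Integrable (fun x : R3 => ‖Q x‖ ^ 2)) (W : R3 → ℝ) (hWm : Measurable W)
    (hWbd : ∃ C, ∀ x, |W x| ≤ C) (hWc : ContinuousAt W 0) :
    Tendsto (fun t : ℝ => ∫ y : R3, W (t⁻¹ • y) * ‖Q y‖ ^ 2) atTop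
      (nhds (W 0 * ∫ y : R3, ‖Q y‖ ^ 2)) := by
  obtain ⟨C, hC⟩ := hWbd
  have key : Tendsto (fun t : ℝ => ∫ y : R3, W (t⁻¹ • y) * ‖Q y‖ ^ 2) atTop
      (nhds (∫ y : R3, W 0 * ‖Q y‖ ^ 2)) := by
    apply tendsto_integral_filter_of_dominated_convergence (fun y => C * ‖Q y‖ ^ 2)
    · exact Eventually.of_forall fun t =>
        ((hWm.comp (measurable_const_smul t⁻¹)).mul
          (hQc.norm.pow 2).measurable).aestronglyMeasurable
    · refine Eventually.of_forall fun t => ae_of_all _ fun y => ?_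
      rw [Real.norm_eq_abs, abs_mul, abs_of_nonneg (by positivity : (0:ℝ) ≤ ‖Q y‖ ^ 2)]
      exact mul_le_mul_of_nonneg_right (hC _) (by positivity)
    · exact hQ2.const_mul C
    · refine ae_of_all _ fun y => ?_
      have h4 : Tendsto (fun t : ℝ => t⁻¹) atTop (nhds 0) := tendsto_inv_atTop_zero
      have h5 : Tendsto (fun t : ℝ => t⁻¹ • y) atTop (nhds 0) := by
        simpa using h4.smul_const y
      exact (hWc.tendsto.comp h5).mul_const _
  simpa [integral_const_mul] using key

set_option maxHeartbeats 1000000 in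
theorem stmt2 (V : R3 → ℝ) (hV : Differentiable ℝ V)
    (hVbd : ∃ C, ∀ x, |V x| ≤ C) (hxdVbd : ∃ C, ∀ x, |xdV V x| ≤ C)
    (hVc : ContinuousAt V 0) (hxdVc : ContinuousAt (xdV V) 0)
    (Q : R3 → ℝ) (hQ : Differentiable ℝ Q)
    (hQ2 : Integrable (fun x => ‖Q x‖ ^ 2))
    (hQg : Integrable (fun x => ‖fderiv ℝ Q x‖ ^ 2))
    (hQ4 : Integrable (fun x => ‖Q x‖ ^ 4))
    (hMQ : 0 < Mfun Q) (hGQ : 0 < Gfun Q) (hPoh : 2 * H0 Q = 3 * Gfun Q) :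
    ∀ ε > (0 : ℝ), ∃ μ' > (0 : ℝ), ∀ μ ∈ Set.Ioc (0 : ℝ) μ', ∃ φ : R3 → ℂ,
      Differentiable ℝ φ ∧
      Integrable (fun x => ‖φ x‖ ^ 2) ∧
      Integrable (fun x => ‖fderiv ℝ φ x‖ ^ 2) ∧
      Integrable (fun x => ‖φ x‖ ^ 4) ∧
      Mfun φ ≤ μ ∧ K2 V φ ≤ 0 ∧ 1 ≤ Gfun φ ∧
      IV V φ ≤ μ⁻¹ * (E0 Q * Mfun Q) + (V 0 + ε) * μ := by
  intro ε hε
  obtain ⟨m, hm_def⟩ : ∃ m, (∫ x : R3, ‖Q x‖ ^ 2) = m := ⟨_, rfl⟩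
  obtain ⟨q, hq_def⟩ : ∃ q, (∫ x : R3, ‖Q x‖ ^ 4) = q := ⟨_, rfl⟩
  obtain ⟨k, hk_def⟩ : ∃ k, (∫ x : R3, ‖fderiv ℝ Q x‖ ^ 2) = k := ⟨_, rfl⟩
  have hm : 0 < m := by
    have h := hMQ; simp only [Mfun] at h; rw [hm_def] at h; linarith
  have hq : 0 < q := by
    have h := hGQ; simp only [Gfun] at h; rw [hq_def] at h; linarith
  have hk34 : k = 3 / 4 * q := by
    have h := hPoh; simp only [H0, Gfun] at h; rw [hk_def, hq_def] at h; linarith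
  have hE0v : E0 Q = q / 8 := by
    simp only [E0, H0, Gfun]; rw [hk_def, hq_def]; linarith
  have hMQv : Mfun Q = m / 2 := by
    simp only [Mfun]; rw [hm_def]; ring
  -- limits of the potential averages
  have hxdVm := aux_xdV_meas V
  have hFt := aux_tendsto hQ.continuous hQ2 (xdV V) hxdVm hxdVbd hxdVc
  have hGt := aux_tendsto hQ.continuous hQ2 V hV.continuous.measurable hVbd hVc
  rw [aux_xdV_zero V, zero_mul] at hFt
  rw [hm_def] at hGt
  have hδ : 0 < 3 * m * ε / 8 := by positivity
  have h1 : ∀ᶠ t : ℝ in atTop,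
      |∫ y : R3, xdV V (t⁻¹ • y) * ‖Q y‖ ^ 2| ≤ 3 * m * ε / 8 := by
    filter_upwards [Metric.tendsto_nhds.mp hFt _ hδ] with t ht
    rw [Real.dist_eq, sub_zero] at ht; exact ht.le
  have h2 : ∀ᶠ t : ℝ in atTop,
      |(∫ y : R3, V (t⁻¹ • y) * ‖Q y‖ ^ 2) - V 0 * m| ≤ 3 * m * ε / 8 := by
    filter_upwards [Metric.tendsto_nhds.mp hGt _ hδ] with t ht
    rw [Real.dist_eq] at ht; exact ht.le
  obtain ⟨Λ₀, hΛ₀⟩ := eventually_atTop.mp (h1.and h2)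
  set Λ : ℝ := max Λ₀ 1 with hΛ_def
  have hΛ1 : (1:ℝ) ≤ Λ := le_max_right _ _
  have hΛpos : (0:ℝ) < Λ := lt_of_lt_of_le one_pos hΛ1
  refine ⟨min (min (m * q / 8) (m / (2 * Λ))) (min 1 (q * m / ε)),
    lt_min (lt_min (by positivity) (by positivity)) (lt_min one_pos (by positivity)), ?_⟩
  intro μ hμ
  obtain ⟨hμ0, hμle⟩ := hμ
  have hμa : μ ≤ m * q / 8 := hμle.trans ((min_le_left _ _).trans (min_le_left _ _))
  have hμb : μ ≤ m / (2 * Λ) := hμle.trans ((min_le_left _ _).trans (min_le_right _ _))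
  have hμc : μ ≤ 1 := hμle.trans ((min_le_right _ _).trans (min_le_left _ _))
  have hμd : μ ≤ q * m / ε := hμle.trans ((min_le_right _ _).trans (min_le_right _ _))
  set c : ℝ := ε / (q * m) with hc_def
  have hc : 0 < c := by positivity
  have hcqm : c * (q * m) = ε := by rw [hc_def]; field_simp
  set s : ℝ := 1 + c * μ ^ 2 with hs_def
  have hs1 : 1 ≤ s := by
    have := mul_nonneg hc.le (sq_nonneg μ); rw [hs_def]; linarith
  have hs_sub : s - 1 = c * μ ^ 2 := by rw [hs_def]; ring
  have hs2 : s ≤ 2 := by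
    have h3 : μ * μ ≤ (q * m / ε) * 1 := mul_le_mul hμd hμc hμ0.le (by positivity)
    have h4 : c * (q * m / ε) = 1 := by rw [hc_def]; field_simp
    have h5 := mul_le_mul_of_nonneg_left h3 hc.le
    linarith only [h5, h4, hs_sub]
  have hs0 : 0 < s := by linarith
  set a : ℝ := Real.sqrt s with ha_def
  have has : a ^ 2 = s := Real.sq_sqrt hs0.le
  have ha : 0 < a := Real.sqrt_pos.mpr hs0
  set lam : ℝ := s * m / (2 * μ) with hlam_def
  have hlam : 0 < lam := by rw [hlam_def]; positivity
  have hΛlam : Λ ≤ lam := by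
    have h5 : μ * (2 * Λ) ≤ m := (le_div_iff₀ (by positivity)).mp hμb
    have h6 : (0:ℝ) ≤ (s - 1) * m := mul_nonneg (by linarith) hm.le
    rw [hlam_def, le_div_iff₀ (by positivity)]
    linarith only [h5, h6]
  have hΛ₀lam : Λ₀ ≤ lam := (le_max_left _ _).trans hΛlam
  set A : ℝ := a * lam with hA_def
  have hA : 0 < A := mul_pos ha hlam
  have hA2 : A ^ 2 = s * lam ^ 2 := by rw [hA_def, mul_pow, has]
  have hA4 : A ^ 4 = s ^ 2 * lam ^ 4 := by
    have h6 : A ^ 4 = (A ^ 2) ^ 2 := by ring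
    rw [h6, hA2]; ring
  -- abbreviations for the potential averages at scale lam
  obtain ⟨f, hf_def⟩ : ∃ f, (∫ y : R3, xdV V (lam⁻¹ • y) * ‖Q y‖ ^ 2) = f := ⟨_, rfl⟩
  obtain ⟨g, hg_def⟩ : ∃ g, (∫ y : R3, V (lam⁻¹ • y) * ‖Q y‖ ^ 2) = g := ⟨_, rfl⟩
  have hfb : |f| ≤ 3 * m * ε / 8 := by rw [← hf_def]; exact (hΛ₀ lam hΛ₀lam).1
  have hgb : |g - V 0 * m| ≤ 3 * m * ε / 8 := by rw [← hg_def]; exact (hΛ₀ lam hΛ₀lam).2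
  -- value computations
  have hv0 : A ^ 2 * (lam ^ 3)⁻¹ = 2 * μ / m := by
    rw [hA2, hlam_def]
    field_simp
  have hv2 : A ^ 2 * ((lam ^ 3)⁻¹ * m) = 2 * μ := by
    rw [← mul_assoc, hv0]; field_simp
  have hv4 : A ^ 4 * ((lam ^ 3)⁻¹ * q) = s ^ 3 * m * q / (2 * μ) := by
    rw [hA4, hlam_def]
    field_simp
  have hvg : (A * lam) ^ 2 * ((lam ^ 3)⁻¹ * k) = 3 * s ^ 2 * m * q / (8 * μ) := by
    rw [hk34, mul_pow, hA2, hlam_def]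
    field_simp
    ring
  -- functional values for the competitor
  have hMval : Mfun (fun x : R3 => ((A * Q (lam • x) : ℝ) : ℂ)) = μ := by
    simp only [Mfun]
    rw [aux_int_pow Q hA.le hlam 2, hm_def, hv2]
    ring
  have hGval : Gfun (fun x : R3 => ((A * Q (lam • x) : ℝ) : ℂ)) = s ^ 3 * m * q / (8 * μ) := by
    simp only [Gfun]
    rw [aux_int_pow Q hA.le hlam 4, hq_def, hv4]
    field_simp
    ring
  have hHval : H0 (fun x : R3 => ((A * Q (lam • x) : ℝ) : ℂ)) = 3 * s ^ 2 * m * q / (16 * μ) := by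
    simp only [H0]
    rw [aux_int_fderiv hQ hA.le hlam, hk_def, hvg]
    field_simp
    ring
  have hWval : (∫ x : R3, xdV V x * ‖((A * Q (lam • x) : ℝ) : ℂ)‖ ^ 2) = 2 * μ / m * f := by
    rw [aux_int_weight (xdV V) Q hA.le hlam, hf_def, ← mul_assoc, hv0]
  have hint_f : Integrable (fun y : R3 => xdV V (lam⁻¹ • y) * ‖Q y‖ ^ 2) := by
    obtain ⟨C, hC⟩ := hxdVbd
    apply hQ2.bdd_mul ((hxdVm.comp (measurable_const_smul lam⁻¹)).aestronglyMeasurable)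
    exact ae_of_all _ fun y => by rw [Real.norm_eq_abs]; exact hC _
  have hint_g : Integrable (fun y : R3 => V (lam⁻¹ • y) * ‖Q y‖ ^ 2) := by
    obtain ⟨C, hC⟩ := hVbd
    apply hQ2.bdd_mul
      ((hV.continuous.measurable.comp (measurable_const_smul lam⁻¹)).aestronglyMeasurable)
    exact ae_of_all _ fun y => by rw [Real.norm_eq_abs]; exact hC _
  have hW2val : (∫ x : R3, (xdV V x + 2 * V x) * ‖((A * Q (lam • x) : ℝ) : ℂ)‖ ^ 2)
      = 2 * μ / m * (f + 2 * g) := by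
    rw [aux_int_weight (fun x => xdV V x + 2 * V x) Q hA.le hlam]
    have hsplit : (∫ y : R3, ((fun x => xdV V x + 2 * V x) (lam⁻¹ • y)) * ‖Q y‖ ^ 2)
        = f + 2 * g := by
      rw [show (fun y : R3 => ((fun x => xdV V x + 2 * V x) (lam⁻¹ • y)) * ‖Q y‖ ^ 2)
          = fun y : R3 => xdV V (lam⁻¹ • y) * ‖Q y‖ ^ 2 + 2 * (V (lam⁻¹ • y) * ‖Q y‖ ^ 2)
          from funext fun y => by ring]
      rw [integral_add hint_f (hint_g.const_mul 2), integral_const_mul, hf_def, hg_def]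
    rw [hsplit, ← mul_assoc, hv0]
  -- the competitor
  refine ⟨fun x : R3 => ((A * Q (lam • x) : ℝ) : ℂ), aux_diff hQ A lam, ?_, ?_, ?_, ?_, ?_, ?_, ?_⟩
  · -- L² integrability
    have heq : (fun x : R3 => ‖((A * Q (lam • x) : ℝ) : ℂ)‖ ^ 2)
        = fun x => A ^ 2 * ((fun y => ‖Q y‖ ^ 2) (lam • x)) := by
      funext x; rw [aux_norm Q A lam hA.le x, mul_pow]
    rw [show (fun x : R3 => ‖(fun x : R3 => ((A * Q (lam • x) : ℝ) : ℂ)) x‖ ^ 2)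
        = fun x : R3 => ‖((A * Q (lam • x) : ℝ) : ℂ)‖ ^ 2 from rfl, heq]
    exact (hQ2.comp_smul hlam.ne').const_mul _
  · -- gradient integrability
    have heq : (fun x : R3 => ‖fderiv ℝ (fun y : R3 => ((A * Q (lam • y) : ℝ) : ℂ)) x‖ ^ 2)
        = fun x => (A * lam) ^ 2 * ((fun y => ‖fderiv ℝ Q y‖ ^ 2) (lam • x)) := by
      funext x; rw [aux_fderiv hQ hA.le hlam.le x, mul_pow]
    rw [heq]
    exact (hQg.comp_smul hlam.ne').const_mul _
  · -- L⁴ integrability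
    have heq : (fun x : R3 => ‖((A * Q (lam • x) : ℝ) : ℂ)‖ ^ 4)
        = fun x => A ^ 4 * ((fun y => ‖Q y‖ ^ 4) (lam • x)) := by
      funext x; rw [aux_norm Q A lam hA.le x, mul_pow]
    rw [show (fun x : R3 => ‖(fun x : R3 => ((A * Q (lam • x) : ℝ) : ℂ)) x‖ ^ 4)
        = fun x : R3 => ‖((A * Q (lam • x) : ℝ) : ℂ)‖ ^ 4 from rfl, heq]
    exact (hQ4.comp_smul hlam.ne').const_mul _
  · -- mass
    exact le_of_eq hMval
  · -- virial
    have hKval : K2 V (fun x : R3 => ((A * Q (lam • x) : ℝ) : ℂ))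
        = (3 * s ^ 2 * m ^ 2 * q - 3 * s ^ 3 * m ^ 2 * q - 8 * μ ^ 2 * f) / (8 * μ * m) := by
      simp only [K2]
      rw [hHval, hGval, hWval]
      field_simp
      ring
    have hf1 : -(3 * m * ε / 8) ≤ f := (abs_le.mp hfb).1
    have hid : 3 * s ^ 3 * m ^ 2 * q - 3 * s ^ 2 * m ^ 2 * q = 3 * s ^ 2 * μ ^ 2 * m * ε := by
      have h11 : 3 * s ^ 2 * m ^ 2 * q * (s - 1) = 3 * s ^ 2 * μ ^ 2 * m * ε := by
        rw [hs_sub]; linear_combination (3 * s ^ 2 * μ ^ 2 * m) * hcqm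
      linarith only [h11]
    have h7 : 8 * μ ^ 2 * (-(3 * m * ε / 8)) ≤ 8 * μ ^ 2 * f :=
      mul_le_mul_of_nonneg_left hf1 (by positivity)
    have hs2' : (0:ℝ) ≤ (s - 1) * (s + 1) := mul_nonneg (by linarith) (by linarith)
    have h8 : (0:ℝ) ≤ (s ^ 2 - 1) * (3 * μ ^ 2 * m * ε) :=
      mul_nonneg (by linarith only [hs2']) (by positivity)
    have hRHS : 3 * s ^ 2 * m ^ 2 * q - 3 * s ^ 3 * m ^ 2 * q - 8 * μ ^ 2 * f ≤ 0 := by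
      linarith only [hid, h7, h8]
    rw [hKval]
    exact div_nonpos_iff.mpr (Or.inr ⟨hRHS, by positivity⟩)
  · -- G ≥ 1
    rw [hGval]
    have hs3 : (1:ℝ) ≤ s ^ 3 := one_le_pow₀ hs1
    rw [le_div_iff₀ (by positivity)]
    have h12 : (0:ℝ) ≤ (s ^ 3 - 1) * (m * q) :=
      mul_nonneg (by linarith) (by positivity)
    linarith only [hμa, h12]
  · -- the I_V bound
    have hIVval : IV V (fun x : R3 => ((A * Q (lam • x) : ℝ) : ℂ))
        = (s ^ 3 * m ^ 2 * q + 8 * μ ^ 2 * f + 16 * μ ^ 2 * g) / (16 * μ * m) := by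
      simp only [IV]
      rw [hGval, hW2val]
      field_simp
      ring
    have hTval : μ⁻¹ * (E0 Q * Mfun Q) + (V 0 + ε) * μ
        = (m ^ 2 * q + 16 * (V 0 + ε) * μ ^ 2 * m) / (16 * μ * m) := by
      rw [hE0v, hMQv]
      field_simp
      ring
    have hf2 : f ≤ 3 * m * ε / 8 := (abs_le.mp hfb).2
    have hg2 : g ≤ V 0 * m + 3 * m * ε / 8 := by
      have := (abs_le.mp hgb).2; linarith [abs_le.mp hgb]
    have h9 : (0:ℝ) ≤ (s - 1) * (2 - s) * (s + 3) :=
      mul_nonneg (mul_nonneg (by linarith) (by linarith)) (by linarith)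
    have hs7 : s ^ 3 - 1 ≤ 7 * (s - 1) := by linarith only [h9]
    have h1' : (s ^ 3 - 1) * (m ^ 2 * q) ≤ 7 * (s - 1) * (m ^ 2 * q) :=
      mul_le_mul_of_nonneg_right hs7 (by positivity)
    have h2' : 7 * (s - 1) * (m ^ 2 * q) = 7 * ε * μ ^ 2 * m := by
      rw [hs_sub]; linear_combination (7 * μ ^ 2 * m) * hcqm
    have h3' : 8 * μ ^ 2 * f ≤ 8 * μ ^ 2 * (3 * m * ε / 8) :=
      mul_le_mul_of_nonneg_left hf2 (by positivity)
    have h4' : 16 * μ ^ 2 * g ≤ 16 * μ ^ 2 * (V 0 * m + 3 * m * ε / 8) :=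
      mul_le_mul_of_nonneg_left hg2 (by positivity)
    have hfinal : s ^ 3 * m ^ 2 * q + 8 * μ ^ 2 * f + 16 * μ ^ 2 * g
        ≤ m ^ 2 * q + 16 * (V 0 + ε) * μ ^ 2 * m := by linarith only [h1', h2', h3', h4']
    rw [hIVval, hTval]
    gcongr

end
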